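/- arXiv:2501.00770 — 2 statements merged into one kernel-verified Lean document; each statement's English description precedes it below -/
import Mathlib

section
/- Let G be a finite group and S a finite semigroup. For the projection homomorphism π from the wreath product G ≀ S onto S, if x and y are regular elements of G ≀ S with π(x) = π(y), then x and y are L-equivalent in G ≀ S. -/
/-- The wreath product `G ≀ S`: underlying set `G^(S¹) × S`. -/
def Wr (G S : Type*) := (WithOne S → G) × S

instance {G S : Type*} [Semigroup G] [Semigroup S] : Semigroup (Wr G S) where
  mul p q := (fun x => p.1 x * q.1 (x * (p.2 : WithOne S)), p.2 * q.2)
  mul_assoc p q r := by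
    refine Prod.ext ?_ (mul_assoc _ _ _)
    funext x
    show (p.1 x * q.1 (x * (p.2 : WithOne S))) *
        r.1 (x * ((p.2 * q.2 : S) : WithOne S)) =
      p.1 x * (q.1 (x * (p.2 : WithOne S)) *
        r.1 ((x * (p.2 : WithOne S)) * (q.2 : WithOne S)))
    rw [WithOne.coe_mul, ← mul_assoc, mul_assoc (p.1 x)]

/-- `x` lies in `T¹y` : `x = y` or `x = t * y` for some `t`. -/
def lLe {T : Type*} [Mul T] (x y : T) : Prop := x = y ∨ ∃ t, x = t * y

/-- Green's `L`-equivalence: `T¹x = T¹y`. -/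
def LEquiv {T : Type*} [Mul T] (x y : T) : Prop := lLe x y ∧ lLe y x

/-- `x` is a regular element: `x = x * y * x` for some `y`. -/
def IsRegularElem {T : Type*} [Mul T] (x : T) : Prop := ∃ y, x = x * y * x

/-- If `G` is a group and some `u : S` satisfies `u * y.2 = x.2`, then
`x` lies in `(G ≀ S)¹ y`. -/
lemma lLe_of_exists {G S : Type*} [Group G] [Semigroup S]
    (x y : Wr G S) (u : S) (hu : u * y.2 = x.2) : lLe x y := by
  refine Or.inr ⟨(fun a => x.1 a * (y.1 (a * (u : WithOne S)))⁻¹, u), ?_⟩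
  show x = (fun a => (x.1 a * (y.1 (a * (u : WithOne S)))⁻¹) *
      y.1 (a * (u : WithOne S)), u * y.2)
  refine Prod.ext ?_ hu.symm
  funext a
  simp

/-- Let `G` be a finite group and `S` a finite semigroup.  If `x, y` are
regular elements of the wreath product `G ≀ S` with the same projection to `S`,
then `x` and `y` are `L`-equivalent in `G ≀ S`; i.e., the projection
`G ≀ S → S` is an `L′` morphism. -/
theorem wreath_projection_Lprime
    {G S : Type*} [Group G] [Fintype G] [Semigroup S] [Fintype S]
    (x y : Wr G S) (hx : IsRegularElem x) (hy : IsRegularElem y)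
    (h : x.2 = y.2) : LEquiv x y := by
  obtain ⟨z, hz⟩ := hy
  obtain ⟨w, hw⟩ := hx
  constructor
  · refine lLe_of_exists x y (y.2 * z.2) ?_
    have : y.2 = ((y * z) * y).2 := congrArg Prod.snd hz
    have h2 : y.2 = (y.2 * z.2) * y.2 := this
    rw [← h2, ← h]
  · refine lLe_of_exists y x (x.2 * w.2) ?_
    have : x.2 = ((x * w) * x).2 := congrArg Prod.snd hw
    have h2 : x.2 = (x.2 * w.2) * x.2 := this
    rw [← h2, h]
end

section
/- Let S be a finite semigroup generated by a finite set X. Identifying two nonempty words over X if they multiply to the same element of S and their paths from the root in the right Cayley graph traverse the same set of transition edges defines a congruence on the free semigroup X⁺. -/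
section KR

variable {X S : Type*} [Semigroup S]

/-- The product in `S^I = S¹` of a word over the generating set `X`
(the vertex of the right Cayley graph reached from the root `I`). -/
def wordProd (σ : X → S) (w : List X) : WithOne S :=
  (w.map fun a => (σ a : WithOne S)).prod

/-- `x ≤_R y` in the monoid `S¹`: `x ∈ y S¹`. -/
def rLe (x y : WithOne S) : Prop := ∃ t : WithOne S, x = y * t

/-- Strict `R`-order in `S¹`. -/
def rLt (x y : WithOne S) : Prop := rLe x y ∧ ¬ rLe y x

/-- The set of transition edges traversed by the path reading the word `w`
from the vertex `s` in the right Cayley graph of `(S, X)`: an edge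
`(p, a) : p → p·σ(a)` is a transition edge when `p·σ(a) <_R p`. -/
def transEdges (σ : X → S) : WithOne S → List X → Set (WithOne S × X)
  | _, [] => ∅
  | s, a :: w =>
      {p | p = (s, a) ∧ rLt (s * (σ a : WithOne S)) s} ∪
        transEdges σ (s * (σ a : WithOne S)) w

/-- The Karnofsky–Rhodes relation: two words are identified iff they multiply
to the same element of `S` and their paths from the root traverse the same set
of transition edges. -/
def krRel (σ : X → S) (u v : List X) : Prop :=
  wordProd σ u = wordProd σ v ∧ transEdges σ 1 u = transEdges σ 1 v

end KR

section KRAux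

variable {X S : Type*} [Semigroup S]

lemma wordProd_cons (σ : X → S) (a : X) (u : List X) :
    wordProd σ (a :: u) = (σ a : WithOne S) * wordProd σ u := by
  simp [wordProd]

lemma wordProd_append (σ : X → S) (u v : List X) :
    wordProd σ (u ++ v) = wordProd σ u * wordProd σ v := by
  simp [wordProd]

lemma factA {s x : WithOne S} (t : WithOne S) (h : rLt (t * s * x) (t * s)) :
    rLt (s * x) s := by
  refine ⟨⟨x, rfl⟩, fun hle => h.2 ?_⟩
  obtain ⟨r, hr⟩ := hle
  exact ⟨r, by rw [mul_assoc, mul_assoc, ← mul_assoc s x r, ← hr]⟩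

lemma transEdges_base (σ : X → S) :
    ∀ (u : List X) (t s : WithOne S),
      transEdges σ (t * s) u =
        (fun q : WithOne S × X => (t * q.1, q.2)) ''
          {q ∈ transEdges σ s u | rLt (t * q.1 * (σ q.2 : WithOne S)) (t * q.1)} := by
  intro u
  induction u with
  | nil => intro t s; simp [transEdges]
  | cons a w ih =>
      intro t s
      have h1 : transEdges σ (t * s) (a :: w) =
          {p | p = (t * s, a) ∧ rLt (t * s * (σ a : WithOne S)) (t * s)} ∪
            transEdges σ (t * s * (σ a : WithOne S)) w := rfl
      have h2 : transEdges σ s (a :: w) =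
          {p | p = (s, a) ∧ rLt (s * (σ a : WithOne S)) s} ∪
            transEdges σ (s * (σ a : WithOne S)) w := rfl
      rw [h1, h2, mul_assoc, ih t (s * (σ a : WithOne S))]
      ext q
      simp only [Set.mem_union, Set.mem_setOf_eq, Set.mem_image, Set.mem_sep_iff,
        ← mul_assoc]
      constructor
      · rintro (⟨hq, hlt⟩ | ⟨p, ⟨hp, hlt⟩, hq⟩)
        · exact ⟨(s, a), ⟨Or.inl ⟨rfl, factA t hlt⟩, hlt⟩, hq.symm⟩
        · exact ⟨p, ⟨Or.inr hp, hlt⟩, hq⟩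
      · rintro ⟨p, ⟨(⟨hp, _⟩ | hp), hlt⟩, hq⟩
        · subst hp
          exact Or.inl ⟨hq.symm, hlt⟩
        · exact Or.inr ⟨p, ⟨hp, hlt⟩, hq⟩

lemma transEdges_append (σ : X → S) :
    ∀ (u v : List X) (s : WithOne S),
      transEdges σ s (u ++ v) = transEdges σ s u ∪ transEdges σ (s * wordProd σ u) v := by
  intro u
  induction u with
  | nil =>
      intro v s
      have : wordProd σ ([] : List X) = 1 := rfl
      simp [transEdges, this]
  | cons a w ih =>
      intro v s
      have h1 : transEdges σ s ((a :: w) ++ v) =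
          {p | p = (s, a) ∧ rLt (s * (σ a : WithOne S)) s} ∪
            transEdges σ (s * (σ a : WithOne S)) (w ++ v) := rfl
      have h2 : transEdges σ s (a :: w) =
          {p | p = (s, a) ∧ rLt (s * (σ a : WithOne S)) s} ∪
            transEdges σ (s * (σ a : WithOne S)) w := rfl
      rw [h1, h2, ih, wordProd_cons, ← mul_assoc, Set.union_assoc]

lemma transEdges_of_one (σ : X → S) (u : List X) (t : WithOne S) :
    transEdges σ t u =
      (fun q : WithOne S × X => (t * q.1, q.2)) ''
        {q ∈ transEdges σ 1 u | rLt (t * q.1 * (σ q.2 : WithOne S)) (t * q.1)} := by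
  have := transEdges_base σ u t 1
  rwa [mul_one] at this

end KRAux

/-- For a finite semigroup `S` generated by `X` (via `σ : X → S`), the
Karnofsky–Rhodes relation is a congruence on the free semigroup `X⁺`: it is an
equivalence relation on nonempty words, compatible with concatenation on both
sides. -/
theorem karnofsky_rhodes_congruence
    {X S : Type*} [Semigroup S] [Fintype S] (σ : X → S)
    (hgen : ∀ s : S, ∃ w : List X, w ≠ [] ∧ wordProd σ w = (s : WithOne S)) :
    Equivalence (fun u v : {w : List X // w ≠ []} => krRel σ u.1 v.1) ∧
    (∀ u v w : List X, u ≠ [] → v ≠ [] → w ≠ [] → krRel σ u v →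
      krRel σ (w ++ u) (w ++ v) ∧ krRel σ (u ++ w) (v ++ w)) := by
  constructor
  · exact ⟨fun u => ⟨rfl, rfl⟩,
      fun h => ⟨h.1.symm, h.2.symm⟩,
      fun h h' => ⟨h.1.trans h'.1, h.2.trans h'.2⟩⟩
  · intro u v w _ _ _ ⟨hp, ht⟩
    constructor
    · refine ⟨by rw [wordProd_append, wordProd_append, hp], ?_⟩
      rw [transEdges_append, transEdges_append, one_mul,
        transEdges_of_one σ u, transEdges_of_one σ v, ht]
    · refine ⟨by rw [wordProd_append, wordProd_append, hp], ?_⟩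
      rw [transEdges_append, transEdges_append, one_mul, one_mul, hp, ht]
end
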